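/- For every integer q ≥ 2 and every word w of length k ≥ 9 over an alphabet of q letters, the recurrence polynomial P_w(x) = 1 + (x − q)·A_w(x), viewed as a polynomial over ℂ of degree k, has exactly one root of absolute value ≥ 1.65; this root is real, simple, and lies in the open interval (q − q^{-(k-2)}, q), and the remaining k − 1 roots (counted with multiplicity) all have absolute value strictly less than 1.65. -/

import Mathlib

/-- The `i`-th autocorrelation bit `b_i` of a word `w` (for `1 ≤ i ≤ w.length`):
`1` if the prefix of `w` of length `i` equals the suffix of `w` of length `i`, else `0`. -/
def acorrBit {α : Type*} [DecidableEq α] (w : List α) (i : ℕ) : ℕ :=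
  if w.take i = w.drop (w.length - i) then 1 else 0

/-- The inverse autocorrelation polynomial `A_w(x) = ∑_{i=1}^k b_i x^(i-1)`, over `ℝ`. -/
noncomputable def APolyR {α : Type*} [DecidableEq α] (w : List α) : Polynomial ℝ :=
  ∑ i ∈ Finset.range w.length, Polynomial.C (acorrBit w (i + 1) : ℝ) * Polynomial.X ^ i

/-- The inverse autocorrelation polynomial `A_w(x)`, over `ℂ`. -/
noncomputable def APolyC {α : Type*} [DecidableEq α] (w : List α) : Polynomial ℂ :=
  ∑ i ∈ Finset.range w.length, Polynomial.C (acorrBit w (i + 1) : ℂ) * Polynomial.X ^ i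

/-- The recurrence polynomial `P_w(x) = 1 + (x - q)·A_w(x)`, over `ℝ`. -/
noncomputable def PPolyR (q : ℕ) {α : Type*} [DecidableEq α] (w : List α) : Polynomial ℝ :=
  1 + (Polynomial.X - Polynomial.C (q : ℝ)) * APolyR w

/-- The recurrence polynomial `P_w(x) = 1 + (x - q)·A_w(x)`, over `ℂ`. -/
noncomputable def PPolyC (q : ℕ) {α : Type*} [DecidableEq α] (w : List α) : Polynomial ℂ :=
  1 + (Polynomial.X - Polynomial.C (q : ℂ)) * APolyC w

/-- `h_w(n)`: the number of words of length `n` over `Fin q` whose last `w.length` letters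
equal `w` and which contain no other occurrence of `w` as consecutive letters. -/
noncomputable def hitCount (q : ℕ) (w : List (Fin q)) (n : ℕ) : ℕ :=
  Nat.card {l : List (Fin q) // l.length = n ∧ l.drop (n - w.length) = w ∧
    ∀ p < n - w.length, (l.drop p).take w.length ≠ w}

/-- The first hitting probability `P_h(w,n) = h_w(n+k)/q^(n+k)` where `k = w.length`. -/
noncomputable def hitProb (q : ℕ) (w : List (Fin q)) (n : ℕ) : ℝ :=
  (hitCount q w (n + w.length) : ℝ) / (q : ℝ) ^ (n + w.length)

/-- The constant `C_{w/w'} = ln(1+r)/r` with `r = (A_w(q) − A_{w'}(q))/A_{w'}(q)`. -/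
noncomputable def Crat (q : ℕ) (w w' : List (Fin q)) : ℝ :=
  Real.log (1 + ((APolyR w).eval (q : ℝ) - (APolyR w').eval (q : ℝ)) / (APolyR w').eval (q : ℝ)) /
    (((APolyR w).eval (q : ℝ) - (APolyR w').eval (q : ℝ)) / (APolyR w').eval (q : ℝ))

/-- The partial-fraction coefficient `c_w = 1/P_w'(α_m)`. -/
noncomputable def cwCoef (q : ℕ) (w : List (Fin q)) (αm : ℝ) : ℝ :=
  1 / ((PPolyR q w).derivative.eval αm)

set_option linter.unusedSectionVars false

namespace S3
open Finset Polynomial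

variable {α : Type*} [DecidableEq α]

def per (w : List α) (j : ℕ) : Prop := ∀ n, n + j < w.length → w[n]? = w[n + j]?

lemma per_iff (w : List α) (j : ℕ) :
    w.take (w.length - j) = w.drop j ↔ per w j := by
  constructor
  · intro h n hn
    have := congrArg (fun l => l[n]?) h
    simp only [List.getElem?_take, List.getElem?_drop] at this
    rw [if_pos (by omega)] at this
    rw [this]; congr 1; omega
  · intro h
    apply List.ext_getElem?
    intro n
    rw [List.getElem?_take, List.getElem?_drop]
    by_cases hn : n < w.length - j
    · rw [if_pos hn]; have := h n (by omega); rw [this]; congr 1; omega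
    · rw [if_neg hn]
      have : w.length ≤ j + n := by omega
      rw [List.getElem?_eq_none this]

lemma per_add {w : List α} {a b : ℕ} (ha : per w a) (hb : per w b) : per w (a + b) := by
  intro n hn
  rw [ha n (by omega)]
  have := hb (n + a) (by omega)
  rw [this]; congr 1; omega

lemma per_mul {w : List α} {a : ℕ} (ha : per w a) (l : ℕ) : per w (l * a) := by
  induction l with
  | zero => intro n hn; simp
  | succ m ih => have := per_add ih ha; rwa [show m*a + a = (m+1)*a by ring] at this

lemma per_sub {w : List α} {a b : ℕ} (hab : a < b) (hk : a + b ≤ w.length)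
    (ha : per w a) (hb : per w b) : per w (b - a) := by
  intro n hn
  by_cases h : n + b < w.length
  · rw [hb n h]
    have h2 := ha (n + (b - a)) (by omega)
    rw [show n + (b-a) + a = n + b by omega] at h2
    rw [← h2]
  · have hna : a ≤ n := by omega
    have h1 := ha (n - a) (by omega)
    have h2 := hb (n - a) (by omega)
    rw [show n - a + a = n by omega] at h1
    rw [← h1, h2]; congr 1; omega

lemma per_gcd {w : List α} : ∀ N a b : ℕ, a + b ≤ N → 0 < a → 0 < b → a + b ≤ w.length →
    per w a → per w b → per w (Nat.gcd a b) := by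
  intro N
  induction N with
  | zero => intro a b h ha0; omega
  | succ n ih =>
    intro a b hN ha0 hb0 hab hpa hpb
    rcases lt_trichotomy a b with h | h | h
    · have hs : per w (b - a) := per_sub h hab hpa hpb
      have := ih a (b - a) (by omega) ha0 (by omega) (by omega) hpa hs
      rwa [Nat.gcd_sub_self_right (le_of_lt h)] at this
    · subst h; rwa [Nat.gcd_self]
    · have hs : per w (a - b) := per_sub h (by omega) hpb hpa
      have := ih b (a - b) (by omega) hb0 (by omega) (by omega) hpb hs
      rw [Nat.gcd_sub_self_right (le_of_lt h)] at this
      rwa [Nat.gcd_comm] at this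

lemma geo {ρ : ℝ} (h0 : 0 ≤ ρ) (h1 : ρ ≤ 20/33) (n : ℕ) :
    ∑ j ∈ range n, ρ^j ≤ 33/13 := by
  have hne : ρ ≠ 1 := by intro h; rw [h] at h1; norm_num at h1
  rw [geom_sum_eq hne]
  have hd : (0:ℝ) < 1 - ρ := by linarith
  have he : (ρ^n - 1)/(ρ - 1) = (1 - ρ^n)/(1 - ρ) := by
    rw [show (1:ℝ) - ρ^n = -(ρ^n - 1) by ring, show (1:ℝ) - ρ = -(ρ - 1) by ring, neg_div_neg_eq]
  rw [he, div_le_iff₀ hd]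
  nlinarith [pow_nonneg h0 n]

lemma acorrBit_le_one (w : List α) (i : ℕ) : acorrBit w i ≤ 1 := by
  unfold acorrBit; split <;> omega

lemma acorrBit_len (w : List α) : acorrBit w w.length = 1 := by
  unfold acorrBit
  rw [if_pos]
  rw [List.take_length, Nat.sub_self, List.drop_zero]

lemma acorrBit_eq_iff (w : List α) (j : ℕ) (hj : j ≤ w.length) :
    acorrBit w (w.length - j) = 1 ↔ w.take (w.length - j) = w.drop j := by
  unfold acorrBit
  rw [show w.length - (w.length - j) = j by omega]
  split <;> simp_all

lemma normB_case1 (t : ℂ) (ht : ‖t‖ ≤ 20/33) (c : ℕ → ℕ) (k : ℕ) (hk : 9 ≤ k)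
    (hc0 : c 0 = 1) (hcle : ∀ j, c j ≤ 1) (hz : ∀ j, 1 ≤ j → j ≤ 4 → c j = 0) :
    (0.48:ℝ) ≤ ‖∑ j ∈ range k, (c j : ℂ) * t^j‖ := by
  set ρ := ‖t‖ with hρ
  have hρ0 : 0 ≤ ρ := norm_nonneg t
  have hsum : ∑ j ∈ range k, (c j : ℂ) * t^j
      = (∑ i ∈ range (k-1), (c (i+1) : ℂ) * t^(i+1)) + 1 := by
    rw [show k = (k-1)+1 by omega, Finset.sum_range_succ']
    simp [hc0]
  have hsplit : (∑ i ∈ range (k-1), (c (i+1) : ℂ) * t^(i+1))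
      = (∑ i ∈ range 4, (c (i+1) : ℂ) * t^(i+1)) + ∑ i ∈ Ico 4 (k-1), (c (i+1) : ℂ) * t^(i+1) := by
    rw [Finset.sum_range_add_sum_Ico _ (by omega : 4 ≤ k - 1)]
  have h4 : (∑ i ∈ range 4, (c (i+1) : ℂ) * t^(i+1)) = 0 := by
    apply Finset.sum_eq_zero
    intro i hi
    rw [mem_range] at hi
    rw [hz (i+1) (by omega) (by omega)]
    simp
  have hS : ‖∑ i ∈ Ico 4 (k-1), (c (i+1) : ℂ) * t^(i+1)‖ ≤ ρ^5 * (33/13) := by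
    calc ‖∑ i ∈ Ico 4 (k-1), (c (i+1) : ℂ) * t^(i+1)‖
        ≤ ∑ i ∈ Ico 4 (k-1), ρ^(i+1) := by
          apply (norm_sum_le _ _).trans
          apply Finset.sum_le_sum
          intro i _
          rw [norm_mul, norm_pow]
          have : ‖((c (i+1) : ℕ) : ℂ)‖ ≤ 1 := by
            rw [Complex.norm_natCast]; exact_mod_cast hcle (i+1)
          nlinarith [pow_nonneg hρ0 (i+1), this, norm_nonneg ((c (i+1):ℂ))]
      _ = ∑ i ∈ range (k-1-4), ρ^(4+i+1) := by
          rw [Finset.sum_Ico_eq_sum_range]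
      _ = ρ^5 * ∑ i ∈ range (k-1-4), ρ^i := by
          rw [Finset.mul_sum]
          apply Finset.sum_congr rfl
          intro i _
          rw [show 4+i+1 = 5+i by omega, pow_add]
      _ ≤ ρ^5 * (33/13) := by
          apply mul_le_mul_of_nonneg_left (geo hρ0 ht _) (pow_nonneg hρ0 5)
  have hρ5 : ρ^5 ≤ (20/33)^5 := pow_le_pow_left₀ hρ0 ht 5
  calc (0.48:ℝ) ≤ 1 - (20/33)^5 * (33/13) := by norm_num
    _ ≤ 1 - ρ^5 * (33/13) := by nlinarith
    _ ≤ ‖(1:ℂ)‖ - ‖∑ i ∈ range (k-1), (c (i+1) : ℂ) * t^(i+1)‖ := by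
        rw [norm_one]; rw [hsplit, h4, zero_add]; linarith [hS]
    _ ≤ ‖∑ j ∈ range k, (c j : ℂ) * t^j‖ := by
        rw [hsum]
        have h := norm_sub_norm_le (1:ℂ) (-(∑ i ∈ range (k-1), (c (i+1) : ℂ) * t^(i+1)))
        rw [norm_neg, sub_neg_eq_add] at h
        rw [add_comm]
        linarith


lemma normB_case2 (t : ℂ) (ht : ‖t‖ ≤ 20/33) (c : ℕ → ℕ) (k p : ℕ) (hk : 9 ≤ k)
    (hp1 : 1 ≤ p) (hp4 : p ≤ 4) (hcle : ∀ j, c j ≤ 1)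
    (hc1 : ∀ j, j < k → p ∣ j → c j = 1)
    (hc0 : ∀ j, 1 ≤ j → j + p ≤ k → ¬ p ∣ j → c j = 0) :
    (0.48:ℝ) ≤ ‖∑ j ∈ range k, (c j : ℂ) * t^j‖ := by
  set ρ := ‖t‖ with hρdef
  have hρ0 : 0 ≤ ρ := norm_nonneg t
  set m := (k-1)/p + 1 with hm
  have hdm := Nat.div_mul_le_self (k-1) p
  have hmod := Nat.div_add_mod (k-1) p
  have hmodlt : (k-1) % p < p := Nat.mod_lt _ (by omega)
  have hmp : k ≤ m * p := by
    have h1 : m * p = ((k-1)/p) * p + p := Nat.succ_mul _ _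
    have h2 : p * ((k-1)/p) + (k-1) % p = k - 1 := Nat.div_add_mod _ _
    have h3 : p * ((k-1)/p) = ((k-1)/p) * p := mul_comm _ _
    omega
  have hlp : ∀ l, l < m → l * p < k := by
    intro l hl
    have : l * p ≤ (k-1)/p * p := Nat.mul_le_mul_right p (by omega)
    omega
  -- G as a filtered sum
  have hG : ∑ j ∈ (range k).filter (fun j => p ∣ j), (c j : ℂ) * t^j
      = ∑ l ∈ range m, (t^p)^l := by
    rw [eq_comm]
    apply Finset.sum_nbij' (fun l => l * p) (fun j => j / p)
    · intro l hl
      rw [mem_range] at hl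
      rw [mem_filter, mem_range]
      exact ⟨hlp l hl, dvd_mul_left p l⟩
    · intro j hj
      rw [mem_filter, mem_range] at hj
      rw [mem_range, hm]
      have := Nat.div_le_div_right (c := p) (by omega : j ≤ k-1)
      omega
    · intro l hl
      exact Nat.mul_div_cancel l (by omega)
    · intro j hj
      rw [mem_filter] at hj
      exact Nat.div_mul_cancel hj.2
    · intro l hl
      rw [mem_range] at hl
      rw [hc1 (l*p) (hlp l hl) (dvd_mul_left p l)]
      rw [← pow_mul, Nat.cast_one, one_mul, mul_comm l p]
  have hsplit := Finset.sum_filter_add_sum_filter_not (range k) (fun j => p ∣ j)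
      (fun j => (c j : ℂ) * t^j)
  -- bound R
  have hR : ‖∑ j ∈ (range k).filter (fun j => ¬ p ∣ j), (c j : ℂ) * t^j‖ ≤ (20/33)^6 * (33/13) := by
    calc ‖∑ j ∈ (range k).filter (fun j => ¬ p ∣ j), (c j : ℂ) * t^j‖
        ≤ ∑ j ∈ (range k).filter (fun j => ¬ p ∣ j), (if k - p < j then ρ^j else 0) := by
          apply (norm_sum_le _ _).trans
          apply Finset.sum_le_sum
          intro j hj
          rw [mem_filter, mem_range] at hj
          by_cases hjp : k - p < j
          · rw [if_pos hjp, norm_mul, norm_pow]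
            have h1 : ‖((c j : ℕ) : ℂ)‖ ≤ 1 := by
              rw [Complex.norm_natCast]; exact_mod_cast hcle j
            nlinarith [pow_nonneg hρ0 j, norm_nonneg ((c j : ℂ))]
          · rw [if_neg hjp]
            have hj1 : 1 ≤ j := by
              rcases Nat.eq_zero_or_pos j with h | h
              · exfalso; exact hj.2 (h ▸ dvd_zero p)
              · exact h
            rw [hc0 j hj1 (by omega) hj.2]
            simp
      _ ≤ ∑ j ∈ range k, (if k - p < j then ρ^j else 0) := by
          apply Finset.sum_le_sum_of_subset_of_nonneg (Finset.filter_subset _ _)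
          intro j _ _
          split <;> [exact pow_nonneg hρ0 j; rfl]
      _ = ∑ j ∈ Ico (k-p+1) k, ρ^j := by
          rw [← Finset.sum_range_add_sum_Ico _ (by omega : k-p+1 ≤ k)]
          rw [Finset.sum_eq_zero (fun j hj => by rw [mem_range] at hj; rw [if_neg (by omega)]), zero_add]
          apply Finset.sum_congr rfl
          intro j hj
          rw [mem_Ico] at hj
          rw [if_pos (by omega)]
      _ = ∑ i ∈ range (k - (k-p+1)), ρ^(k-p+1+i) := by rw [Finset.sum_Ico_eq_sum_range]
      _ ≤ (20/33)^6 * (33/13) := by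
          have : ∀ i, ρ^(k-p+1+i) = ρ^(k-p+1) * ρ^i := fun i => pow_add ρ _ _
          rw [Finset.sum_congr rfl (fun i _ => this i), ← Finset.mul_sum]
          have h6 : ρ^(k-p+1) ≤ (20/33)^6 := by
            calc ρ^(k-p+1) ≤ ρ^6 := by
                  apply pow_le_pow_of_le_one hρ0 (by linarith) (by omega)
              _ ≤ (20/33)^6 := pow_le_pow_left₀ hρ0 ht 6
          have := geo hρ0 ht (k - (k-p+1))
          have hg0 : (0:ℝ) ≤ ∑ i ∈ range (k - (k-p+1)), ρ^i :=
            Finset.sum_nonneg (fun i _ => pow_nonneg hρ0 i)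
          calc ρ^(k-p+1) * ∑ i ∈ range (k - (k-p+1)), ρ^i
              ≤ (20/33)^6 * ∑ i ∈ range (k - (k-p+1)), ρ^i := by
                apply mul_le_mul_of_nonneg_right h6 hg0
            _ ≤ (20/33)^6 * (33/13) := by
                apply mul_le_mul_of_nonneg_left this (by positivity)
  -- lower bound on G
  have hGlow : (1 - (20/33)^9) / (1 + 20/33) ≤ ‖∑ l ∈ range m, (t^p)^l‖ := by
    have hgm := geom_sum_mul (t^p) m
    have h1 : ‖(t^p)^m - 1‖ ≥ 1 - (20/33)^9 := by
      have : ‖(t^p)^m‖ ≤ (20/33)^9 := by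
        rw [norm_pow, norm_pow, ← pow_mul]
        calc ρ^(p*m) ≤ ρ^9 := pow_le_pow_of_le_one hρ0 (by linarith) (by rw [mul_comm]; omega)
          _ ≤ (20/33)^9 := pow_le_pow_left₀ hρ0 ht 9
      have h2 := norm_sub_norm_le (1:ℂ) ((t^p)^m)
      rw [norm_one] at h2
      rw [norm_sub_rev]
      linarith
    have h2 : ‖t^p - 1‖ ≤ 1 + 20/33 := by
      calc ‖t^p - 1‖ ≤ ‖t^p‖ + ‖(1:ℂ)‖ := norm_sub_le _ _
        _ ≤ 20/33 + 1 := by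
            rw [norm_one, norm_pow]
            have : ρ^p ≤ ρ^1 := pow_le_pow_of_le_one hρ0 (by linarith) hp1
            rw [pow_one] at this
            linarith
        _ = 1 + 20/33 := by ring
    have h3 : ‖∑ l ∈ range m, (t^p)^l‖ * ‖t^p - 1‖ ≥ 1 - (20/33)^9 := by
      rw [← norm_mul, hgm]; linarith
    have h4 : (0:ℝ) < 1 + 20/33 := by norm_num
    rw [div_le_iff₀ h4]
    nlinarith [norm_nonneg (∑ l ∈ range m, (t^p)^l), norm_nonneg (t^p - 1)]
  -- combine
  have hfinal : ‖∑ j ∈ range k, (c j : ℂ) * t^j‖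
      ≥ ‖∑ l ∈ range m, (t^p)^l‖ - ‖∑ j ∈ (range k).filter (fun j => ¬ p ∣ j), (c j : ℂ) * t^j‖ := by
    rw [← hsplit, hG]
    have := norm_sub_norm_le (∑ l ∈ range m, (t^p)^l)
        (-(∑ j ∈ (range k).filter (fun j => ¬ p ∣ j), (c j : ℂ) * t^j))
    rw [norm_neg, sub_neg_eq_add] at this
    linarith
  have : (0.48:ℝ) ≤ (1 - (20/33)^9) / (1 + 20/33) - (20/33)^6 * (33/13) := by norm_num
  linarith



lemma evalA (w : List α) (z : ℂ) (hz0 : z ≠ 0) (hk : 1 ≤ w.length) :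
    (APolyC w).eval z
      = z^(w.length-1) * ∑ j ∈ range w.length, (acorrBit w (w.length - j) : ℂ) * (z⁻¹) ^ j := by
  unfold APolyC
  rw [Polynomial.eval_finset_sum]
  simp only [Polynomial.eval_mul, Polynomial.eval_C, Polynomial.eval_pow, Polynomial.eval_X]
  rw [← Finset.sum_range_reflect]
  rw [Finset.mul_sum]
  apply Finset.sum_congr rfl
  intro j hj
  rw [Finset.mem_range] at hj
  rw [show w.length - 1 - j + 1 = w.length - j by omega]
  have hzz : z ^ (w.length-1) * z⁻¹ ^ j = z ^ (w.length-1-j) := by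
    rw [inv_pow, mul_comm, inv_mul_eq_div, eq_comm, eq_div_iff (pow_ne_zero j hz0), ← pow_add]
    congr 1; omega
  rw [← mul_assoc, mul_comm (z ^ (w.length-1)), mul_assoc, hzz]

lemma normA (w : List α) (hk : 9 ≤ w.length) (z : ℂ) (hz : (33/20:ℝ) ≤ ‖z‖) :
    (0.48:ℝ) * ‖z‖^(w.length - 1) ≤ ‖(APolyC w).eval z‖ := by
  have hz0 : z ≠ 0 := by
    intro h; rw [h, norm_zero] at hz; norm_num at hz
  have ht : ‖z⁻¹‖ ≤ 20/33 := by
    rw [norm_inv]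
    have h1 : (0:ℝ) < 33/20 := by norm_num
    have := one_div_le_one_div_of_le h1 hz
    rw [one_div, one_div] at this
    calc ‖z‖⁻¹ ≤ (33/20:ℝ)⁻¹ := this
      _ = 20/33 := by norm_num
  rw [evalA w z hz0 (by omega), norm_mul, norm_pow]
  have hB : (0.48:ℝ) ≤ ‖∑ j ∈ range w.length, (acorrBit w (w.length - j) : ℂ) * (z⁻¹) ^ j‖ := by
    set c : ℕ → ℕ := fun j => acorrBit w (w.length - j) with hc
    have hcle : ∀ j, c j ≤ 1 := fun j => acorrBit_le_one w _
    by_cases hP : ∃ j, 0 < j ∧ j ≤ 4 ∧ w.take (w.length - j) = w.drop j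
    · -- case 2 : small period exists
      have hPex : ∃ j, 0 < j ∧ w.take (w.length - j) = w.drop j := by
        obtain ⟨j, h1, _, h3⟩ := hP; exact ⟨j, h1, h3⟩
      set p := Nat.find hPex with hpdef
      obtain ⟨hp1, hptake⟩ := Nat.find_spec hPex
      have hper : per w p := (per_iff w p).mp hptake
      have hp4 : p ≤ 4 := by
        obtain ⟨j, h1, h2, h3⟩ := hP
        exact le_trans (Nat.find_min' hPex ⟨h1, h3⟩) h2
      apply normB_case2 z⁻¹ ht c w.length p hk hp1 hp4 hcle
      · intro j hj hdvd
        obtain ⟨l, hl⟩ := hdvd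
        have hperj : per w j := by
          have := per_mul hper l
          rwa [(mul_comm l p).trans hl.symm] at this
        have := (per_iff w j).mpr hperj
        rw [hc]
        exact (acorrBit_eq_iff w j (by omega)).mpr this
      · intro j hj1 hjk hdvd
        by_contra hne
        have hcj : c j = 1 := by
          have := hcle j; omega
        have htake : w.take (w.length - j) = w.drop j :=
          (acorrBit_eq_iff w j (by omega)).mp hcj
        have hperj : per w j := (per_iff w j).mp htake
        have hg := per_gcd (p + j) p j (le_refl _) hp1 (by omega) (by omega) hper hperj
        set g := Nat.gcd p j with hgdef
        have hg1 : 0 < g := Nat.gcd_pos_of_pos_left j hp1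
        have hgp : g ∣ p := Nat.gcd_dvd_left p j
        have hglt : g < p := by
          have hle : g ≤ p := Nat.le_of_dvd hp1 hgp
          rcases lt_or_eq_of_le hle with h | h
          · exact h
          · exfalso; apply hdvd; rw [← h]; exact Nat.gcd_dvd_right p j
        have := Nat.find_min hPex hglt
        apply this
        exact ⟨hg1, (per_iff w g).mpr hg⟩
    · -- case 1 : no period ≤ 4
      apply normB_case1 z⁻¹ ht c w.length hk
      · rw [hc]; simp only [Nat.sub_zero]; exact acorrBit_len w
      · exact hcle
      · intro j h1 h4
        by_contra hne
        have hcj : c j = 1 := by have := hcle j; omega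
        have htake : w.take (w.length - j) = w.drop j :=
          (acorrBit_eq_iff w j (by omega)).mp hcj
        exact hP ⟨j, h1, h4, htake⟩
  have hzp : (0:ℝ) ≤ ‖z‖^(w.length - 1) := pow_nonneg (norm_nonneg z) _
  calc (0.48:ℝ) * ‖z‖^(w.length-1) = ‖z‖^(w.length-1) * 0.48 := by ring
    _ ≤ ‖z‖^(w.length-1) * ‖∑ j ∈ range w.length, (acorrBit w (w.length - j) : ℂ) * (z⁻¹) ^ j‖ :=
        mul_le_mul_of_nonneg_left hB hzp

lemma mapA (w : List α) : (APolyR w).map (algebraMap ℝ ℂ) = APolyC w := by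
  unfold APolyR APolyC
  rw [Polynomial.map_sum]
  apply Finset.sum_congr rfl
  intro i _
  rw [Polynomial.map_mul, Polynomial.map_C, Polynomial.map_pow, Polynomial.map_X]
  norm_num

lemma mapP (q : ℕ) (w : List α) : (PPolyR q w).map (algebraMap ℝ ℂ) = PPolyC q w := by
  unfold PPolyR PPolyC
  rw [Polynomial.map_add, Polynomial.map_mul, Polynomial.map_sub, Polynomial.map_one,
    Polynomial.map_C, Polynomial.map_X, mapA]
  norm_num

lemma evalPC (q : ℕ) (w : List α) (x : ℝ) :
    (PPolyC q w).eval (x : ℂ) = (((PPolyR q w).eval x : ℝ) : ℂ) := by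
  rw [← mapP, Polynomial.eval_map]
  exact Polynomial.eval₂_at_apply (algebraMap ℝ ℂ) x

lemma APolyR_ge (w : List α) (hk : 1 ≤ w.length) (x : ℝ) (hx : 0 ≤ x) :
    x^(w.length - 1) ≤ (APolyR w).eval x := by
  unfold APolyR
  rw [Polynomial.eval_finset_sum]
  simp only [Polynomial.eval_mul, Polynomial.eval_C, Polynomial.eval_pow, Polynomial.eval_X]
  have hmem : w.length - 1 ∈ Finset.range w.length := by rw [Finset.mem_range]; omega
  have hterm : x^(w.length-1) ≤ (acorrBit w (w.length - 1 + 1) : ℝ) * x^(w.length-1) := by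
    rw [show w.length - 1 + 1 = w.length by omega, acorrBit_len]
    norm_num
  refine le_trans hterm (Finset.single_le_sum (f := fun i => (acorrBit w (i+1):ℝ) * x^i) ?_ hmem)
  intro i _
  positivity

lemma two_mul_lt_two_pow : ∀ n, 5 ≤ n → 2*n < 2^n := by
  intro n hn
  induction n with
  | zero => omega
  | succ m ih =>
    rcases Nat.lt_or_ge m 5 with h | h
    · interval_cases m <;> first
        | (exfalso; omega)
        | norm_num
    · have := ih h
      have h2 : 2^m + 2^m = 2^(m+1) := by rw [pow_succ]; ring
      have h3 : 2 ≤ 2^m := by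
        calc 2 = 2^1 := rfl
          _ ≤ 2^m := Nat.pow_le_pow_right (by norm_num) (by omega)
      omega

lemma exists_root (q : ℕ) (w : List α) (hq : 2 ≤ q) (hk : 9 ≤ w.length) :
    ∃ αm : ℝ, ((q:ℝ) - ((q:ℝ)^(w.length - 2))⁻¹ < αm ∧ αm < q) ∧ (PPolyR q w).eval αm = 0 := by
  set k := w.length with hkdef
  have hq2 : (2:ℝ) ≤ (q:ℝ) := by exact_mod_cast hq
  have hqpos : (0:ℝ) < (q:ℝ) := by linarith
  set ε : ℝ := ((q:ℝ)^(k - 2))⁻¹ with hε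
  have hεpos : 0 < ε := by positivity
  have hεsmall : ε ≤ (1:ℝ)/2^7 := by
    rw [hε, show (1:ℝ)/2^7 = ((2:ℝ)^7)⁻¹ by norm_num]
    apply inv_anti₀ (by positivity)
    calc (2:ℝ)^7 ≤ (2:ℝ)^(k-2) := by
          apply pow_le_pow_right₀ (by norm_num) (by omega)
      _ ≤ (q:ℝ)^(k-2) := by
          apply pow_le_pow_left₀ (by norm_num) hq2
  have hevq : (PPolyR q w).eval (q:ℝ) = 1 := by
    unfold PPolyR; simp
  have hkey : 1 < ε * ((q:ℝ) - ε)^(k-1) := by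
    have h1 : ε * ((q:ℝ)-ε)^(k-1) = (q:ℝ) * ((1:ℝ) - ε/(q:ℝ))^(k-1) := by
      have he : (q:ℝ) - ε = (q:ℝ) * (1 - ε/(q:ℝ)) := by field_simp
      rw [he, mul_pow, hε]
      rw [show k - 1 = (k-2) + 1 by omega, pow_succ ((q:ℝ)) (k-2)]
      field_simp
    rw [h1]
    set a : ℝ := ε/(q:ℝ) with ha
    have ha0 : 0 < a := by positivity
    have ha1 : a ≤ ((2:ℝ)^(k-1))⁻¹ := by
      rw [ha, hε, div_eq_mul_inv, ← mul_inv]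
      apply inv_anti₀ (by positivity)
      calc (2:ℝ)^(k-1) = 2^(k-2) * 2 := by
            rw [← pow_succ]; congr 1; omega
        _ ≤ (q:ℝ)^(k-2) * (q:ℝ) := by
            apply mul_le_mul _ hq2 (by norm_num) (by positivity)
            apply pow_le_pow_left₀ (by norm_num) hq2
    have ham2 : (-2:ℝ) ≤ -a := by
      have h2p : (0:ℝ) < (2:ℝ)^(k-1) := by positivity
      have hi1 : ((2:ℝ)^(k-1))⁻¹ ≤ 1 := by
        rw [inv_le_one_iff₀]
        right
        calc (1:ℝ) = 2^0 := by norm_num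
          _ ≤ 2^(k-1) := by apply pow_le_pow_right₀ (by norm_num) (by omega)
      linarith
    have hbern : 1 - ((k-1:ℕ):ℝ) * a ≤ (1 - a)^(k-1) := by
      have := one_add_mul_le_pow ham2 (k-1)
      rw [show (1:ℝ) + ((k-1:ℕ):ℝ) * (-a) = 1 - ((k-1:ℕ):ℝ)*a by ring] at this
      rw [show (1:ℝ) + (-a) = 1 - a by ring] at this
      exact this
    have hka : ((k-1:ℕ):ℝ) * a < 1/2 := by
      have hnat := two_mul_lt_two_pow (k-1) (by omega)
      have h2p : (0:ℝ) < (2:ℝ)^(k-1) := by positivity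
      have hcast : 2 * ((k-1:ℕ):ℝ) < (2:ℝ)^(k-1) := by
        have h := hnat
        have : ((2*(k-1):ℕ):ℝ) < ((2^(k-1):ℕ):ℝ) := by exact_mod_cast h
        push_cast at this
        linarith
      have hPinv : (2:ℝ)^(k-1) * ((2:ℝ)^(k-1))⁻¹ = 1 := mul_inv_cancel₀ (ne_of_gt h2p)
      have hinvpos : (0:ℝ) < ((2:ℝ)^(k-1))⁻¹ := inv_pos.mpr h2p
      have hk1 : (0:ℝ) ≤ ((k-1:ℕ):ℝ) := Nat.cast_nonneg _
      have step := mul_lt_mul_of_pos_right hcast hinvpos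
      rw [mul_assoc, hPinv] at step
      have hmm : ((k-1:ℕ):ℝ) * a ≤ ((k-1:ℕ):ℝ) * ((2:ℝ)^(k-1))⁻¹ := mul_le_mul_of_nonneg_left ha1 hk1
      linarith
    have hpow : (1:ℝ)/2 < (1-a)^(k-1) := by linarith
    have hppos : (0:ℝ) < (1-a)^(k-1) := by linarith
    have h2x : 2 * ((1-a)^(k-1)) ≤ (q:ℝ) * ((1-a)^(k-1)) := mul_le_mul_of_nonneg_right hq2 (le_of_lt hppos)
    linarith
  have hεq : ε < (q:ℝ) := by
    have : (1:ℝ)/2^7 < 2 := by norm_num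
    linarith
  have hqε0 : (0:ℝ) ≤ (q:ℝ) - ε := by linarith
  have hevqe : (PPolyR q w).eval ((q:ℝ) - ε) < 0 := by
    have hA := APolyR_ge w (by omega) ((q:ℝ) - ε) hqε0
    unfold PPolyR
    rw [Polynomial.eval_add, Polynomial.eval_one, Polynomial.eval_mul, Polynomial.eval_sub,
      Polynomial.eval_X, Polynomial.eval_C]
    rw [show ((q:ℝ) - ε - (q:ℝ)) = -ε by ring]
    have h3 : ε * ((q:ℝ)-ε)^(k-1) ≤ ε * (APolyR w).eval ((q:ℝ)-ε) :=
      mul_le_mul_of_nonneg_left hA (le_of_lt hεpos)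
    nlinarith [hkey]
  have hcont : ContinuousOn (fun x => (PPolyR q w).eval x) (Set.Icc ((q:ℝ)-ε) (q:ℝ)) :=
    (Polynomial.continuous _).continuousOn
  have hsub := intermediate_value_Ioo (by linarith : (q:ℝ)-ε ≤ (q:ℝ)) hcont
  have h0mem : (0:ℝ) ∈ Set.Ioo ((PPolyR q w).eval ((q:ℝ)-ε)) ((PPolyR q w).eval (q:ℝ)) := by
    rw [hevq]; exact ⟨hevqe, by norm_num⟩
  obtain ⟨αm, hmem, hval⟩ := hsub h0mem
  exact ⟨αm, ⟨hmem.1, hmem.2⟩, hval⟩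

lemma coeffA (w : List α) (j : ℕ) :
    (APolyC w).coeff j = if j < w.length then (acorrBit w (j+1) : ℂ) else 0 := by
  unfold APolyC
  rw [Polynomial.finset_sum_coeff]
  have : ∀ i ∈ Finset.range w.length,
      (Polynomial.C (acorrBit w (i+1) : ℂ) * Polynomial.X ^ i).coeff j
        = if j = i then (acorrBit w (i+1) : ℂ) else 0 := by
    intro i _
    rw [Polynomial.coeff_C_mul, Polynomial.coeff_X_pow]
    split <;> simp_all
  rw [Finset.sum_congr rfl this]
  rw [Finset.sum_ite_eq (Finset.range w.length) j]
  simp [Finset.mem_range]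

lemma monicA (w : List α) (hk : 1 ≤ w.length) :
    (APolyC w).natDegree = w.length - 1 ∧ (APolyC w).coeff (w.length - 1) = 1 := by
  have hc : (APolyC w).coeff (w.length - 1) = 1 := by
    rw [coeffA w _, if_pos (by omega), show w.length - 1 + 1 = w.length by omega,
      acorrBit_len]
    norm_num
  constructor
  · apply le_antisymm
    · apply Polynomial.natDegree_sum_le_of_forall_le
      intro i hi
      rw [Finset.mem_range] at hi
      apply le_trans (Polynomial.natDegree_mul_le)
      simp only [Polynomial.natDegree_C, Polynomial.natDegree_X_pow]
      omega
    · apply Polynomial.le_natDegree_of_ne_zero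
      rw [hc]; exact one_ne_zero
  · exact hc

lemma Ane (w : List α) (hk : 1 ≤ w.length) : APolyC w ≠ 0 := by
  intro h
  have := (monicA w hk).2
  rw [h] at this
  simp at this

lemma degP (q : ℕ) (w : List α) (hk : 9 ≤ w.length) :
    (PPolyC q w).natDegree = w.length ∧ (PPolyC q w).coeff w.length = 1 := by
  have hA := monicA w (by omega)
  have hAm : (APolyC w).Monic := by
    unfold Polynomial.Monic Polynomial.leadingCoeff
    rw [hA.1, hA.2]
  have hf : ((Polynomial.X - Polynomial.C (q:ℂ)) * APolyC w).natDegree = w.length := by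
    rw [Polynomial.natDegree_mul (Polynomial.X_sub_C_ne_zero _) (Ane w (by omega))]
    rw [Polynomial.natDegree_X_sub_C, hA.1]
    omega
  have hlf : ((Polynomial.X - Polynomial.C (q:ℂ)) * APolyC w).coeff w.length = 1 := by
    have : ((Polynomial.X - Polynomial.C (q:ℂ)) * APolyC w).coeff
        (((Polynomial.X - Polynomial.C (q:ℂ)) * APolyC w).natDegree) = 1 := by
      rw [← Polynomial.leadingCoeff]
      rw [Polynomial.leadingCoeff_mul]
      rw [(Polynomial.monic_X_sub_C (q:ℂ)).leadingCoeff, hAm.leadingCoeff]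
      norm_num
    rwa [hf] at this
  have hcoeff : (PPolyC q w).coeff w.length = 1 := by
    unfold PPolyC
    rw [Polynomial.coeff_add, hlf, Polynomial.coeff_one, if_neg (by omega)]
    norm_num
  constructor
  · apply le_antisymm
    · apply le_trans (Polynomial.natDegree_add_le _ _)
      rw [Polynomial.natDegree_one, hf]
      omega
    · apply Polynomial.le_natDegree_of_ne_zero
      rw [hcoeff]; exact one_ne_zero
  · exact hcoeff

lemma pow_diff_bound (s : ℝ) (hs : 1 ≤ s) (z₁ z₂ : ℂ) (h1 : ‖z₁‖ ≤ s) (h2 : ‖z₂‖ ≤ s) (i : ℕ) :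
    ‖z₁^i - z₂^i‖ ≤ (i:ℝ) * s^(i-1) * ‖z₁ - z₂‖ := by
  have hgs := geom_sum₂_mul z₁ z₂ i
  rw [← hgs, norm_mul]
  have hD : ‖∑ j ∈ Finset.range i, z₁^j * z₂^(i-1-j)‖ ≤ (i:ℝ) * s^(i-1) := by
    apply le_trans (norm_sum_le _ _)
    have : ∀ j ∈ Finset.range i, ‖z₁^j * z₂^(i-1-j)‖ ≤ s^(i-1) := by
      intro j hj
      rw [Finset.mem_range] at hj
      rw [norm_mul, norm_pow, norm_pow]
      calc ‖z₁‖^j * ‖z₂‖^(i-1-j) ≤ s^j * s^(i-1-j) := by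
            apply mul_le_mul (pow_le_pow_left₀ (norm_nonneg _) h1 j)
              (pow_le_pow_left₀ (norm_nonneg _) h2 _) (by positivity) (by positivity)
        _ = s^(i-1) := by rw [← pow_add]; congr 1; omega
    apply le_trans (Finset.sum_le_sum this)
    rw [Finset.sum_const, Finset.card_range, nsmul_eq_mul]
  apply mul_le_mul_of_nonneg_right hD (norm_nonneg _)

lemma evalAC (w : List α) (z : ℂ) :
    (APolyC w).eval z = ∑ i ∈ Finset.range w.length, (acorrBit w (i+1) : ℂ) * z^i := by
  unfold APolyC
  rw [Polynomial.eval_finset_sum]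
  simp

lemma diffA (w : List α) (s : ℝ) (hs : 1 ≤ s) (z₁ z₂ : ℂ) (h1 : ‖z₁‖ ≤ s) (h2 : ‖z₂‖ ≤ s) :
    ‖(APolyC w).eval z₁ - (APolyC w).eval z₂‖
      ≤ (∑ i ∈ Finset.range w.length, (i:ℝ) * s^(i-1)) * ‖z₁ - z₂‖ := by
  rw [evalAC, evalAC, ← Finset.sum_sub_distrib]
  apply le_trans (norm_sum_le _ _)
  rw [Finset.sum_mul]
  apply Finset.sum_le_sum
  intro i _
  rw [show (acorrBit w (i+1) : ℂ) * z₁^i - (acorrBit w (i+1) : ℂ) * z₂^i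
    = (acorrBit w (i+1) : ℂ) * (z₁^i - z₂^i) by ring]
  rw [norm_mul]
  have hb : ‖((acorrBit w (i+1) : ℕ) : ℂ)‖ ≤ 1 := by
    rw [Complex.norm_natCast]
    exact_mod_cast acorrBit_le_one w (i+1)
  calc ‖((acorrBit w (i+1):ℕ) : ℂ)‖ * ‖z₁^i - z₂^i‖ ≤ 1 * ‖z₁^i - z₂^i‖ :=
        mul_le_mul_of_nonneg_right hb (norm_nonneg _)
    _ = ‖z₁^i - z₂^i‖ := one_mul _
    _ ≤ (i:ℝ) * s^(i-1) * ‖z₁ - z₂‖ := pow_diff_bound s hs z₁ z₂ h1 h2 i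

lemma derivA (w : List α) (s : ℝ) (hs : 1 ≤ s) (x : ℂ) (hx : ‖x‖ ≤ s) :
    ‖(Polynomial.derivative (APolyC w)).eval x‖
      ≤ ∑ i ∈ Finset.range w.length, (i:ℝ) * s^(i-1) := by
  unfold APolyC
  rw [Polynomial.derivative_sum]
  rw [Polynomial.eval_finset_sum]
  apply le_trans (norm_sum_le _ _)
  apply Finset.sum_le_sum
  intro i _
  rw [Polynomial.derivative_C_mul_X_pow]
  rw [Polynomial.eval_mul, Polynomial.eval_C, Polynomial.eval_pow, Polynomial.eval_X]
  rw [norm_mul, norm_pow]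
  have hb : ‖((acorrBit w (i+1) : ℂ) * (i:ℂ))‖ ≤ (i:ℝ) := by
    rw [norm_mul, Complex.norm_natCast, Complex.norm_natCast]
    have := acorrBit_le_one w (i+1)
    have h1 : ((acorrBit w (i+1):ℕ):ℝ) ≤ 1 := by exact_mod_cast this
    nlinarith [Nat.cast_nonneg (α := ℝ) i, Nat.cast_nonneg (α := ℝ) (acorrBit w (i+1))]
  have hxp : ‖x‖^(i-1) ≤ s^(i-1) := pow_le_pow_left₀ (norm_nonneg _) hx _
  have h0s : (0:ℝ) ≤ s^(i-1) := by positivity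
  nlinarith [norm_nonneg ((acorrBit w (i+1) : ℂ) * (i:ℂ)), pow_nonneg (norm_nonneg x) (i-1),
    Nat.cast_nonneg (α := ℝ) i]

lemma Msum_le (k : ℕ) (hk : 1 ≤ k) (s : ℝ) (hs : 1 < s) :
    ∑ i ∈ Finset.range k, (i:ℝ) * s^(i-1) ≤ ((k:ℝ)-1) * s^(k-1) / (s-1) := by
  have hs0 : (0:ℝ) < s - 1 := by linarith
  have h1 : ∑ i ∈ Finset.range k, (i:ℝ) * s^(i-1)
      = ∑ j ∈ Finset.range (k-1), ((j:ℝ)+1) * s^j := by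
    rw [show k = (k-1)+1 by omega, Finset.sum_range_succ']
    simp
  rw [h1]
  have h2 : ∑ j ∈ Finset.range (k-1), ((j:ℝ)+1) * s^j
      ≤ ∑ j ∈ Finset.range (k-1), ((k:ℝ)-1) * s^j := by
    apply Finset.sum_le_sum
    intro j hj
    rw [Finset.mem_range] at hj
    apply mul_le_mul_of_nonneg_right _ (by positivity)
    have : (j:ℝ)+1 ≤ ((k-1:ℕ):ℝ) := by exact_mod_cast hj
    rw [Nat.cast_sub (by omega)] at this
    push_cast at this ⊢
    linarith
  apply le_trans h2
  rw [← Finset.mul_sum]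
  rw [geom_sum_eq (by intro h; rw [h] at hs; exact lt_irrefl _ hs : s ≠ 1)]
  have hk1 : (0:ℝ) ≤ (k:ℝ)-1 := by
    have : (1:ℝ) ≤ k := by exact_mod_cast hk
    linarith
  rw [mul_div_assoc]
  apply mul_le_mul_of_nonneg_left _ hk1
  gcongr <;> linarith

lemma numk (k : ℕ) (hk : 9 ≤ k) : ((k:ℝ)-1) < 0.2304 * 1.038 * (1.87:ℝ)^(k-1) := by
  induction k, hk using Nat.le_induction with
  | base => norm_num
  | succ n hn ih =>
    have ihn := ih
    have hpow : (1.87:ℝ)^(n+1-1) = 1.87^(n-1) * 1.87 := by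
      rw [show n+1-1 = (n-1)+1 by omega, pow_succ]
    rw [hpow]
    have hn9 : (9:ℝ) ≤ n := by exact_mod_cast hn
    push_cast
    nlinarith [ihn, pow_nonneg (by norm_num : (0:ℝ) ≤ 1.87) (n-1)]

lemma central (q k : ℕ) (hq : 2 ≤ q) (hk : 9 ≤ k) :
    ((k:ℝ)-1) * ((q:ℝ)+0.038)^(k-1) / ((q:ℝ)+0.038-1)
      < (0.48 * ((q:ℝ)-0.038)^(k-1))^2 := by
  have hq2 : (2:ℝ) ≤ (q:ℝ) := by exact_mod_cast hq
  set s : ℝ := (q:ℝ)+0.038 with hsdef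
  set r : ℝ := (q:ℝ)-0.038 with hrdef
  have hs1 : (1.038:ℝ) ≤ s - 1 := by rw [hsdef]; linarith
  have hr0 : (0:ℝ) < r := by rw [hrdef]; linarith
  have hs0 : (0:ℝ) < s := by rw [hsdef]; linarith
  have hr2 : 1.87 * s ≤ r^2 := by
    rw [hsdef, hrdef]
    nlinarith [mul_nonneg (by linarith : (0:ℝ) ≤ (q:ℝ)-2) (by linarith : (0:ℝ) ≤ (q:ℝ)+0.054)]
  have hRHS : (0.48 * r^(k-1))^2 = 0.2304 * (r^2)^(k-1) := by
    rw [mul_pow, ← pow_mul, ← pow_mul, Nat.mul_comm (k-1) 2]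
    norm_num
  rw [hRHS]
  have h1 : (1.87:ℝ)^(k-1) * s^(k-1) ≤ (r^2)^(k-1) := by
    rw [← mul_pow]
    apply pow_le_pow_left₀ (by positivity) hr2
  have hkn := numk k hk
  have hsp : (0:ℝ) < s^(k-1) := by positivity
  have hk1 : (0:ℝ) ≤ (k:ℝ)-1 := by
    have : (9:ℝ) ≤ (k:ℝ) := by exact_mod_cast hk
    linarith
  -- LHS ≤ (k-1) s^(k-1)/1.038 < 0.2304 * 1.87^(k-1) * s^(k-1) ≤ 0.2304 (r²)^(k-1)
  have hL1 : ((k:ℝ)-1) * s^(k-1) / (s-1) ≤ ((k:ℝ)-1) * s^(k-1) / 1.038 := by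
    apply div_le_div_of_nonneg_left (by positivity) (by norm_num) hs1
  have hL2 : ((k:ℝ)-1) * s^(k-1) / 1.038 < 0.2304 * ((1.87:ℝ)^(k-1) * s^(k-1)) := by
    rw [div_lt_iff₀ (by norm_num : (0:ℝ) < 1.038)]
    calc ((k:ℝ)-1) * s^(k-1) < (0.2304 * 1.038 * (1.87:ℝ)^(k-1)) * s^(k-1) := by
          apply mul_lt_mul_of_pos_right hkn hsp
      _ = 0.2304 * ((1.87:ℝ)^(k-1) * s^(k-1)) * 1.038 := by ring
  calc ((k:ℝ)-1) * s^(k-1) / (s-1) ≤ ((k:ℝ)-1) * s^(k-1) / 1.038 := hL1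
    _ < 0.2304 * ((1.87:ℝ)^(k-1) * s^(k-1)) := hL2
    _ ≤ 0.2304 * (r^2)^(k-1) := by nlinarith [h1]

lemma root_fact (q : ℕ) (w : List α) (hq : 2 ≤ q) (hk : 9 ≤ w.length)
    (z : ℂ) (hz : (PPolyC q w).eval z = 0) (hznorm : (33/20:ℝ) ≤ ‖z‖) :
    ‖z - (q:ℂ)‖ * ‖(APolyC w).eval z‖ = 1 ∧
    0.48 * ((q:ℝ)-0.038)^(w.length-1) ≤ ‖(APolyC w).eval z‖ ∧
    ‖z - (q:ℂ)‖ ≤ 0.038 ∧ ‖z‖ ≤ (q:ℝ)+0.038 := by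
  set K := w.length with hK
  have hq2 : (2:ℝ) ≤ (q:ℝ) := by exact_mod_cast hq
  have hprod : (z - (q:ℂ)) * (APolyC w).eval z = -1 := by
    have he : (PPolyC q w).eval z = 1 + (z - (q:ℂ)) * (APolyC w).eval z := by
      unfold PPolyC
      rw [Polynomial.eval_add, Polynomial.eval_one, Polynomial.eval_mul,
        Polynomial.eval_sub, Polynomial.eval_X, Polynomial.eval_C]
    rw [he] at hz
    linear_combination hz
  have hnprod : ‖z - (q:ℂ)‖ * ‖(APolyC w).eval z‖ = 1 := by
    rw [← norm_mul, hprod, norm_neg, norm_one]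
  have hA1 : 0.48 * ‖z‖^(K-1) ≤ ‖(APolyC w).eval z‖ := normA w hk z hznorm
  have hzpow : (33/20:ℝ)^8 ≤ ‖z‖^(K-1) := by
    calc (33/20:ℝ)^8 ≤ (33/20:ℝ)^(K-1) := by
          apply pow_le_pow_right₀ (by norm_num) (by omega)
      _ ≤ ‖z‖^(K-1) := pow_le_pow_left₀ (by norm_num) hznorm _
  have hAc : (26.37:ℝ) ≤ ‖(APolyC w).eval z‖ := by
    have : (26.37:ℝ) ≤ 0.48 * (33/20:ℝ)^8 := by norm_num
    nlinarith [hA1, hzpow]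
  have hd038 : ‖z - (q:ℂ)‖ ≤ 0.038 := by
    have hd0 : (0:ℝ) ≤ ‖z - (q:ℂ)‖ := norm_nonneg _
    nlinarith [hnprod, hAc, hd0]
  have hzub : ‖z‖ ≤ (q:ℝ)+0.038 := by
    have h1 : ‖z‖ ≤ ‖(q:ℂ)‖ + ‖z - (q:ℂ)‖ := by
      have := norm_add_le ((q:ℂ)) (z - (q:ℂ))
      simpa using this
    rw [Complex.norm_natCast] at h1
    linarith
  have hzlb : (q:ℝ) - 0.038 ≤ ‖z‖ := by
    have h1 := norm_sub_norm_le ((q:ℂ)) z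
    rw [Complex.norm_natCast, norm_sub_rev] at h1
    linarith
  have hA2 : 0.48 * ((q:ℝ)-0.038)^(K-1) ≤ ‖(APolyC w).eval z‖ := by
    apply le_trans _ hA1
    apply mul_le_mul_of_nonneg_left _ (by norm_num)
    apply pow_le_pow_left₀ (by linarith) hzlb
  exact ⟨hnprod, hA2, hd038, hzub⟩

lemma prodP (q : ℕ) (w : List α) (z : ℂ) (hz : (PPolyC q w).eval z = 0) :
    (z - (q:ℂ)) * (APolyC w).eval z = -1 := by
  have he : (PPolyC q w).eval z = 1 + (z - (q:ℂ)) * (APolyC w).eval z := by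
    unfold PPolyC
    rw [Polynomial.eval_add, Polynomial.eval_one, Polynomial.eval_mul,
      Polynomial.eval_sub, Polynomial.eval_X, Polynomial.eval_C]
  rw [he] at hz
  linear_combination hz

lemma uniq_root (q : ℕ) (w : List α) (hq : 2 ≤ q) (hk : 9 ≤ w.length)
    (z₁ z₂ : ℂ) (h1 : (PPolyC q w).eval z₁ = 0) (h2 : (PPolyC q w).eval z₂ = 0)
    (hn1 : (33/20:ℝ) ≤ ‖z₁‖) (hn2 : (33/20:ℝ) ≤ ‖z₂‖) : z₁ = z₂ := by
  set K := w.length with hK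
  have hq2 : (2:ℝ) ≤ (q:ℝ) := by exact_mod_cast hq
  set s : ℝ := (q:ℝ) + 0.038 with hs
  set X : ℝ := 0.48 * ((q:ℝ)-0.038)^(K-1) with hX
  have hXpos : 0 < X := by
    rw [hX]
    have : (0:ℝ) < (q:ℝ) - 0.038 := by linarith
    positivity
  obtain ⟨hp1, hA1, hd1, hu1⟩ := root_fact q w hq hk z₁ h1 hn1
  obtain ⟨hp2, hA2, hd2, hu2⟩ := root_fact q w hq hk z₂ h2 hn2
  by_contra hne
  have hprod1 := prodP q w z₁ h1
  have hprod2 := prodP q w z₂ h2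
  have heq : (z₁ - z₂) * (APolyC w).eval z₁
      = (z₂ - (q:ℂ)) * ((APolyC w).eval z₂ - (APolyC w).eval z₁) := by
    linear_combination hprod1 - hprod2
  set M : ℝ := ∑ i ∈ Finset.range K, (i:ℝ) * s^(i-1) with hM
  have hdiff : ‖(APolyC w).eval z₂ - (APolyC w).eval z₁‖ ≤ M * ‖z₁ - z₂‖ := by
    rw [show ‖z₁ - z₂‖ = ‖z₂ - z₁‖ from (norm_sub_rev _ _)]
    exact diffA w s (by rw [hs]; linarith) z₂ z₁ hu2 hu1
  have hMle : M ≤ ((K:ℝ)-1) * s^(K-1) / (s-1) := Msum_le K (by omega) s (by rw [hs]; linarith)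
  have hcen := central q K hq hk
  have hMX : M < X^2 := lt_of_le_of_lt hMle hcen
  have hne' : z₁ - z₂ ≠ 0 := sub_ne_zero.mpr hne
  have hupos : (0:ℝ) < ‖z₁ - z₂‖ := norm_pos_iff.mpr hne'
  have hnormeq : ‖z₁ - z₂‖ * ‖(APolyC w).eval z₁‖
      = ‖z₂ - (q:ℂ)‖ * ‖(APolyC w).eval z₂ - (APolyC w).eval z₁‖ := by
    rw [← norm_mul, ← norm_mul, heq]
  have hXdM : X ≤ ‖z₂ - (q:ℂ)‖ * M := by
    have c1 : ‖z₁ - z₂‖ * X ≤ ‖z₁ - z₂‖ * ‖(APolyC w).eval z₁‖ :=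
      mul_le_mul_of_nonneg_left hA1 (le_of_lt hupos)
    have c2 : ‖z₂ - (q:ℂ)‖ * ‖(APolyC w).eval z₂ - (APolyC w).eval z₁‖
        ≤ ‖z₂ - (q:ℂ)‖ * (M * ‖z₁ - z₂‖) :=
      mul_le_mul_of_nonneg_left hdiff (norm_nonneg _)
    have c3 : ‖z₁ - z₂‖ * X ≤ ‖z₂ - (q:ℂ)‖ * M * ‖z₁ - z₂‖ := by
      rw [hnormeq] at c1
      calc ‖z₁ - z₂‖ * X ≤ ‖z₂ - (q:ℂ)‖ * ‖(APolyC w).eval z₂ - (APolyC w).eval z₁‖ := c1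
        _ ≤ ‖z₂ - (q:ℂ)‖ * (M * ‖z₁ - z₂‖) := c2
        _ = ‖z₂ - (q:ℂ)‖ * M * ‖z₁ - z₂‖ := by ring
    have c4 : X * ‖z₁ - z₂‖ ≤ ‖z₂ - (q:ℂ)‖ * M * ‖z₁ - z₂‖ := by
      calc X * ‖z₁ - z₂‖ = ‖z₁ - z₂‖ * X := by ring
        _ ≤ _ := c3
    exact le_of_mul_le_mul_right c4 hupos
  have hdpos : 0 < ‖z₂ - (q:ℂ)‖ := by
    rcases eq_or_lt_of_le (norm_nonneg (z₂ - (q:ℂ))) with h | h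
    · exfalso
      rw [← h] at hp2
      rw [zero_mul] at hp2
      norm_num at hp2
    · exact h
  have hdX : ‖z₂ - (q:ℂ)‖ * X ≤ 1 := by
    calc ‖z₂ - (q:ℂ)‖ * X ≤ ‖z₂ - (q:ℂ)‖ * ‖(APolyC w).eval z₂‖ :=
          mul_le_mul_of_nonneg_left hA2 (norm_nonneg _)
      _ = 1 := hp2
  have hfin1 : ‖z₂ - (q:ℂ)‖ * M < ‖z₂ - (q:ℂ)‖ * X^2 :=
    mul_lt_mul_of_pos_left hMX hdpos
  have hfin2 : ‖z₂ - (q:ℂ)‖ * X * X ≤ 1 * X :=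
    mul_le_mul_of_nonneg_right hdX (le_of_lt hXpos)
  nlinarith [hXdM, hfin1, hfin2]

end S3


/-- For `q ≥ 2` and a word `w` of length `k ≥ 9`, the recurrence polynomial
`P_w` over `ℂ` has exactly one root of absolute value `≥ 1.65`; this root is real, simple,
lies in `(q − q^{-(k-2)}, q)`, and the remaining `k − 1` roots (with multiplicity) all have
absolute value `< 1.65`. -/
theorem stmt3 (q k : ℕ) (hq : 2 ≤ q) (hk : 9 ≤ k) (w : List (Fin q)) (hwlen : w.length = k) :
    ∃ αm : ℝ, ((q : ℝ) - (q : ℝ) ^ (-((k : ℤ) - 2)) < αm ∧ αm < q) ∧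
      (PPolyC q w).IsRoot (αm : ℂ) ∧
      (1.65 : ℝ) ≤ ‖(αm : ℂ)‖ ∧
      (PPolyC q w).rootMultiplicity (αm : ℂ) = 1 ∧
      (PPolyC q w).roots.card = k ∧
      ∀ β : ℂ, (PPolyC q w).IsRoot β → β ≠ (αm : ℂ) → ‖β‖ < 1.65 := by
  subst hwlen
  set K := w.length with hK
  have hq2 : (2:ℝ) ≤ (q:ℝ) := by exact_mod_cast hq
  obtain ⟨αm, ⟨hlo, hhi⟩, hroot⟩ := S3.exists_root q w hq hk
  -- epsilon bound
  have hεsmall : ((q:ℝ)^(K-2))⁻¹ ≤ (1:ℝ)/2^7 := by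
    rw [show (1:ℝ)/2^7 = ((2:ℝ)^7)⁻¹ by norm_num]
    apply inv_anti₀ (by positivity)
    calc (2:ℝ)^7 ≤ (2:ℝ)^(K-2) := by
          apply pow_le_pow_right₀ (by norm_num) (by omega)
      _ ≤ (q:ℝ)^(K-2) := by apply pow_le_pow_left₀ (by norm_num) hq2
  have hαlb : (33/20:ℝ) ≤ αm := by
    have : (1:ℝ)/2^7 ≤ 1/2 := by norm_num
    linarith
  have hαpos : (0:ℝ) < αm := by linarith
  -- complex root
  have hCroot : (PPolyC q w).eval ((αm:ℝ) : ℂ) = 0 := by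
    rw [S3.evalPC q w αm, hroot]
    norm_num
  have hnormα : ‖((αm:ℝ):ℂ)‖ = αm := by
    rw [Complex.norm_of_nonneg hαpos.le]
  have hnormge : (33/20:ℝ) ≤ ‖((αm:ℝ):ℂ)‖ := by rw [hnormα]; exact hαlb
  -- nonzero polynomial
  have hP0 : PPolyC q w ≠ 0 := by
    intro h
    have hco := (S3.degP q w hk).2
    rw [h] at hco
    simp at hco
  -- derivative nonzero at root
  have hdernz : (Polynomial.derivative (PPolyC q w)).eval ((αm:ℝ):ℂ) ≠ 0 := by
    set α : ℂ := ((αm:ℝ):ℂ) with hα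
    have hder : Polynomial.derivative (PPolyC q w)
        = APolyC w + (Polynomial.X - Polynomial.C (q:ℂ)) * Polynomial.derivative (APolyC w) := by
      unfold PPolyC
      rw [Polynomial.derivative_add, Polynomial.derivative_one, Polynomial.derivative_mul,
        Polynomial.derivative_sub, Polynomial.derivative_X, Polynomial.derivative_C]
      ring
    obtain ⟨hpA, hAX, hdA, huA⟩ := S3.root_fact q w hq hk α hCroot hnormge
    set s : ℝ := (q:ℝ) + 0.038 with hs
    set Xv : ℝ := 0.48 * ((q:ℝ)-0.038)^(K-1) with hXv
    have hXpos : 0 < Xv := by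
      rw [hXv]
      have : (0:ℝ) < (q:ℝ) - 0.038 := by linarith
      positivity
    set M : ℝ := ∑ i ∈ Finset.range K, (i:ℝ) * s^(i-1) with hM
    have hA' : ‖(Polynomial.derivative (APolyC w)).eval α‖ ≤ M :=
      S3.derivA w s (by rw [hs]; linarith) α huA
    have hMle : M ≤ ((K:ℝ)-1) * s^(K-1) / (s-1) := S3.Msum_le K (by omega) s (by rw [hs]; linarith)
    have hMX : M < Xv^2 := lt_of_le_of_lt hMle (S3.central q K hq hk)
    have hdXle : ‖α - (q:ℂ)‖ * Xv ≤ 1 := by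
      calc ‖α - (q:ℂ)‖ * Xv ≤ ‖α - (q:ℂ)‖ * ‖(APolyC w).eval α‖ :=
            mul_le_mul_of_nonneg_left hAX (norm_nonneg _)
        _ = 1 := hpA
    have hdM : ‖α - (q:ℂ)‖ * M < Xv := by
      rcases eq_or_lt_of_le (norm_nonneg (α - (q:ℂ))) with h | h
      · rw [← h, zero_mul]; exact hXpos
      · have f1 : ‖α - (q:ℂ)‖ * M < ‖α - (q:ℂ)‖ * Xv^2 := mul_lt_mul_of_pos_left hMX h
        have f2 : ‖α - (q:ℂ)‖ * Xv * Xv ≤ 1 * Xv := mul_le_mul_of_nonneg_right hdXle (le_of_lt hXpos)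
        nlinarith
    have hlow : Xv - ‖α - (q:ℂ)‖ * M ≤ ‖(Polynomial.derivative (PPolyC q w)).eval α‖ := by
      rw [hder, Polynomial.eval_add, Polynomial.eval_mul, Polynomial.eval_sub,
        Polynomial.eval_X, Polynomial.eval_C]
      have htri := norm_sub_norm_le ((APolyC w).eval α)
          (-((α - (q:ℂ)) * (Polynomial.derivative (APolyC w)).eval α))
      rw [norm_neg, sub_neg_eq_add] at htri
      have hprodle : ‖(α - (q:ℂ)) * (Polynomial.derivative (APolyC w)).eval α‖
          ≤ ‖α - (q:ℂ)‖ * M := by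
        rw [norm_mul]
        exact mul_le_mul_of_nonneg_left hA' (norm_nonneg _)
      linarith
    intro h0
    rw [h0, norm_zero] at hlow
    linarith
  refine ⟨αm, ⟨?_, hhi⟩, hCroot, ?_, ?_, ?_, ?_⟩
  · -- interval lower bound with zpow
    have hzp : (q:ℝ) ^ (-((K:ℤ) - 2)) = ((q:ℝ)^(K-2))⁻¹ := by
      rw [show -((K:ℤ)-2) = -(((K-2 : ℕ)):ℤ) by
        rw [Nat.cast_sub (by omega : 2 ≤ K)]; push_cast; ring]
      rw [zpow_neg, zpow_natCast]
    rw [hzp]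
    exact hlo
  · calc (1.65:ℝ) = 33/20 := by norm_num
      _ ≤ ‖((αm:ℝ):ℂ)‖ := hnormge
  · -- multiplicity
    have h1 : 0 < (PPolyC q w).rootMultiplicity ((αm:ℝ):ℂ) :=
      (Polynomial.rootMultiplicity_pos hP0).mpr hCroot
    have h2 : ¬ 1 < (PPolyC q w).rootMultiplicity ((αm:ℝ):ℂ) := by
      intro hgt
      have := Polynomial.isRoot_iterate_derivative_of_lt_rootMultiplicity hgt
      rw [Function.iterate_one] at this
      exact hdernz this
    omega
  · -- card roots
    have hsp := (Polynomial.splits_iff_card_roots).mp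
      (IsAlgClosed.splits (PPolyC q w))
    rw [hsp, (S3.degP q w hk).1]
  · -- uniqueness
    intro β hβ hne
    by_contra hge
    push_neg at hge
    have hβ165 : (33/20:ℝ) ≤ ‖β‖ := by
      calc (33/20:ℝ) = 1.65 := by norm_num
        _ ≤ ‖β‖ := hge
    exact hne (S3.uniq_root q w hq hk β ((αm:ℝ):ℂ) hβ hCroot hβ165 hnormge)
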